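/- (Concise regular restrictions with full dimensions identify the algebra; final claim of the Cactus Apolarity Theorem.) Let k be a field, d ≥ 2 and r ≥ 1. Let A be a finite-dimensional commutative k-algebra with dim_k A ≤ r, let ε : A → k be a k-linear functional, let U_1,…,U_d be k-vector spaces each of dimension r, and let f_i : U_i → A be regular k-linear maps. Define the multilinear map T : U_1 × ⋯ × U_d → k by T(u_1,…,u_d) = ε(f_1(u_1)⋯f_d(u_d)). If T is concise in every slot (for each i, the only u ∈ U_i such that T vanishes on every argument tuple whose i-th entry is u is u = 0), then dim_k A = r, every f_i is a k-linear bijection, and ε is a dual generator of A; in particular A is Gorenstein. -/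
import Mathlib


/-!
Statement 14: concise regular restrictions with full dimensions identify the algebra
(final claim of the Cactus Apolarity Theorem).
-/

open scoped BigOperators

namespace Stmt14

/-- `ε : A → k` is a dual generator: `a ↦ (x ↦ ε (a * x))` is a bijection `A → Dual_k A`.
An algebra admitting a dual generator is Gorenstein. -/
def IsDualGenerator (k : Type*) [Field k] (A : Type*) [CommRing A] [Algebra k A]
    (ε : A →ₗ[k] k) : Prop :=
  Function.Bijective fun a : A => ε ∘ₗ LinearMap.mulLeft k a

/-- A `k`-linear map `f : V → A` is regular if the ideal of `A` generated by its image is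
all of `A`. -/
def Regular (k : Type*) [Field k] (A : Type*) [CommRing A] [Algebra k A]
    {V : Type*} [AddCommGroup V] [Module k V] (f : V →ₗ[k] A) : Prop :=
  Ideal.span (Set.range f) = ⊤

/-- **Concise regular restrictions with full dimensions identify the algebra.**
Let `d ≥ 2`, `r ≥ 1`, `A` a finite-dimensional commutative `k`-algebra with
`dim_k A ≤ r`, `ε : A → k` a functional, `U_i` vector spaces of dimension `r` and
`f_i : U_i → A` regular linear maps. If the multilinear map
`T (u₁,…,u_d) = ε (f₁ u₁ ⋯ f_d u_d)` is concise in every slot, then `dim_k A = r`, every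
`f_i` is a linear bijection, and `ε` is a dual generator of `A`; in particular `A` is
Gorenstein. -/
theorem concise_regular_restriction_identifies
    (k : Type*) [Field k] (d r : ℕ) (hd : 2 ≤ d) (hr : 1 ≤ r)
    (A : Type*) [CommRing A] [Algebra k A] [FiniteDimensional k A]
    (hA : Module.finrank k A ≤ r)
    (ε : A →ₗ[k] k)
    (U : Fin d → Type*) [∀ i, AddCommGroup (U i)] [∀ i, Module k (U i)]
    [∀ i, FiniteDimensional k (U i)] (hU : ∀ i, Module.finrank k (U i) = r)
    (f : ∀ i, U i →ₗ[k] A) (hreg : ∀ i, Regular k A (f i))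
    (hconc : ∀ (i : Fin d) (u : U i),
      (∀ x : ∀ j : Fin d, U j, x i = u → ε (∏ j, f j (x j)) = 0) → u = 0) :
    Module.finrank k A = r ∧ (∀ i, Function.Bijective (f i)) ∧
      IsDualGenerator k A ε := by
  classical
  -- each f i is injective
  have hinj : ∀ i, Function.Injective (f i) := by
    intro i
    rw [← LinearMap.ker_eq_bot, LinearMap.ker_eq_bot']
    intro u hu
    apply hconc i u
    intro x hx
    have : (∏ j, f j (x j)) = 0 :=
      Finset.prod_eq_zero (Finset.mem_univ i) (by rw [hx, hu])
    rw [this, map_zero]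
  -- hence dim A = r
  have i0 : Fin d := ⟨0, by omega⟩
  have hAr : Module.finrank k A = r := by
    have := LinearMap.finrank_le_finrank_of_injective (hinj i0)
    rw [hU i0] at this
    omega
  -- each f i is bijective
  have hbij : ∀ i, Function.Bijective (f i) := fun i =>
    ⟨hinj i, (LinearMap.injective_iff_surjective_of_finrank_eq_finrank
      (by rw [hU i, hAr])).mp (hinj i)⟩
  refine ⟨hAr, hbij, ?_⟩
  -- ε is a dual generator
  have hΦ : (fun a : A => ε ∘ₗ LinearMap.mulLeft k a)
      = ((LinearMap.llcomp k A A k ε).comp (LinearMap.mul k A) : A →ₗ[k] Module.Dual k A) := by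
    funext a; ext x; rfl
  rw [IsDualGenerator, hΦ]
  have hinjΦ : Function.Injective
      ((LinearMap.llcomp k A A k ε).comp (LinearMap.mul k A) : A →ₗ[k] Module.Dual k A) := by
    rw [← LinearMap.ker_eq_bot, LinearMap.ker_eq_bot']
    intro a ha
    obtain ⟨u, hu⟩ := (hbij i0).2 a
    have hu0 : u = 0 := by
      apply hconc i0 u
      intro x hx
      have : (∏ j, f j (x j)) = a * ∏ j ∈ Finset.univ.erase i0, f j (x j) := by
        rw [← hu, ← hx]
        exact (Finset.mul_prod_erase Finset.univ (fun j => f j (x j))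
          (Finset.mem_univ i0)).symm
      rw [this]
      have h2 := LinearMap.congr_fun ha (∏ j ∈ Finset.univ.erase i0, f j (x j))
      simpa using h2
    rw [← hu, hu0, map_zero]
  exact ⟨hinjΦ, (LinearMap.injective_iff_surjective_of_finrank_eq_finrank
    (Subspace.dual_finrank_eq).symm).mp hinjΦ⟩

end Stmt14
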